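/- Let X be a real Banach space and A ⊆ X** a bounded set with d := d(0, A) > 0 and M := sup{‖x**‖ : x** ∈ A}. Suppose there exist x₀ ∈ X with ‖x₀‖ = 1 and 0 < ε < 1 such that {f ∈ B(X*) : f(x₀) > ε} ⊆ {f ∈ B(X*) : x**(f) > 0 for all x** ∈ A}. Then for every λ ≥ M/(1 − ε), A ⊆ B**[λx₀, λ − d(1−ε)/(1+ε)] and 0 ∉ B**[λx₀, λ − d(1−ε)/(1+ε)]. -/

import Mathlib

open NormedSpace

set_option synthInstance.maxHeartbeats 400000

lemma stmt3_aux_apply {X : Type*} [NormedAddCommGroup X] [NormedSpace ℝ X]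
    (x₀ : X) (f g : StrongDual ℝ X) (α β : ℝ) :
    (α • f + β • g) x₀ = α * f x₀ + β * g x₀ := by
  simp [ContinuousLinearMap.add_apply, ContinuousLinearMap.smul_apply, smul_eq_mul]

lemma stmt3_aux_apply2 {X : Type*} [NormedAddCommGroup X] [NormedSpace ℝ X]
    (a : StrongDual ℝ (StrongDual ℝ X)) (f g : StrongDual ℝ X) (α β : ℝ) :
    a (α • f + β • g) = α * a f + β * a g := by
  simp [map_add, map_smul, smul_eq_mul]

lemma stmt3_aux_norm {X : Type*} [NormedAddCommGroup X] [NormedSpace ℝ X]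
    (f g : StrongDual ℝ X) {α β : ℝ} (hα : 0 ≤ α) (hβ : 0 ≤ β) (hαβ : α + β = 1)
    (hf : ‖f‖ ≤ 1) (hg : ‖g‖ ≤ 1) : ‖α • f + β • g‖ ≤ 1 := by
  calc ‖α • f + β • g‖ ≤ ‖α • f‖ + ‖β • g‖ := norm_add_le _ _
    _ = α * ‖f‖ + β * ‖g‖ := by
        rw [norm_smul, norm_smul, Real.norm_eq_abs, Real.norm_eq_abs,
          abs_of_nonneg hα, abs_of_nonneg hβ]
    _ ≤ α * 1 + β * 1 := by gcongr
    _ = 1 := by rw [mul_one, mul_one]; exact hαβ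

lemma stmt3_aux_bound {X : Type*} [NormedAddCommGroup X] [NormedSpace ℝ X]
    {x₀ : X} (hx₀ : ‖x₀‖ = 1) {f : StrongDual ℝ X} (hf : ‖f‖ ≤ 1) : |f x₀| ≤ 1 := by
  calc |f x₀| = ‖f x₀‖ := (Real.norm_eq_abs _).symm
    _ ≤ ‖f‖ * ‖x₀‖ := f.le_opNorm x₀
    _ ≤ 1 := by rw [hx₀]; linarith

set_option maxHeartbeats 2000000 in
/-- Converse direction of the ball construction: if a w*-slice of `B(X*)` is contained
in the set of functionals positive on `A`, then for every `λ ≥ M/(1-ε)` the set `A` is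
contained in the closed ball `B**[λx₀, λ - d(1-ε)/(1+ε)]`, which misses `0`. -/
theorem stmt_3 {X : Type*} [NormedAddCommGroup X] [NormedSpace ℝ X] [CompleteSpace X]
    (A : Set (StrongDual ℝ (StrongDual ℝ X))) (d M ε : ℝ) (x₀ : X)
    (hd : 0 < d) (hdA : ∀ a ∈ A, d ≤ ‖a‖) (hM : ∀ a ∈ A, ‖a‖ ≤ M)
    (hx₀ : ‖x₀‖ = 1) (hε0 : 0 < ε) (hε1 : ε < 1)
    (h : {f : StrongDual ℝ X | ‖f‖ ≤ 1 ∧ ε < f x₀} ⊆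
      {f : StrongDual ℝ X | ‖f‖ ≤ 1 ∧ ∀ a ∈ A, 0 < a f})
    (lam : ℝ) (hlam : M / (1 - ε) ≤ lam) :
    A ⊆ Metric.closedBall (lam • inclusionInDoubleDual ℝ X x₀)
        (lam - d * (1 - ε) / (1 + ε)) ∧
    (0 : StrongDual ℝ (StrongDual ℝ X)) ∉ Metric.closedBall (lam • inclusionInDoubleDual ℝ X x₀)
        (lam - d * (1 - ε) / (1 + ε)) := by
  have hε1' : (0:ℝ) < 1 - ε := by linarith
  have hεp : (0:ℝ) < 1 + ε := by linarith
  set r : ℝ := d * (1 - ε) / (1 + ε) with hrdef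
  have hr0 : 0 < r := div_pos (mul_pos hd hε1') hεp
  have hrε : r * (1 + ε) = d * (1 - ε) := by
    rw [hrdef]; field_simp
  have hrd : r ≤ d := by nlinarith
  have hMl : M ≤ lam * (1 - ε) := by
    rw [div_le_iff₀ hε1'] at hlam; linarith
  have hx0ne : x₀ ≠ 0 := by
    intro h0; rw [h0, norm_zero] at hx₀; norm_num at hx₀
  obtain ⟨f₀, hf₀n, hf₀x⟩ : ∃ f₀ : StrongDual ℝ X, ‖f₀‖ = 1 ∧ f₀ x₀ = 1 := by
    obtain ⟨g, hgn, hgx⟩ := exists_dual_vector ℝ x₀ (norm_ne_zero_iff.mpr hx0ne)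
    exact ⟨g, hgn, by rw [hgx, hx₀]; norm_cast⟩
  -- Lemma A : nonnegativity on the closed slice
  have lemA : ∀ a ∈ A, ∀ f : StrongDual ℝ X, ‖f‖ ≤ 1 → ε ≤ f x₀ → 0 ≤ a f := by
    intro a ha f hf hfx
    by_contra hneg
    push_neg at hneg
    set t : ℝ := min (1/2) ((-a f)/(2*(|a f₀|+1))) with ht
    have ht0 : 0 < t := by
      apply lt_min (by norm_num)
      exact div_pos (by linarith) (by positivity)
    have ht2 : t ≤ 1/2 := min_le_left _ _
    have ht3 : t ≤ (-a f)/(2*(|a f₀|+1)) := min_le_right _ _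
    have hmem : ((1-t) • f + t • f₀) ∈ {f : StrongDual ℝ X | ‖f‖ ≤ 1 ∧ ε < f x₀} := by
      refine ⟨stmt3_aux_norm f f₀ (by linarith) ht0.le (by ring) hf hf₀n.le, ?_⟩
      show ε < ((1-t) • f + t • f₀) x₀
      rw [stmt3_aux_apply, hf₀x]
      nlinarith
    have hpos := (h hmem).2 a ha
    rw [stmt3_aux_apply2] at hpos
    have h1 : t * a f₀ ≤ t * |a f₀| := by
      gcongr; exact le_abs_self _
    have h2 : t * |a f₀| ≤ (-a f)/(2*(|a f₀|+1)) * (|a f₀|+1) := by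
      apply mul_le_mul ht3 (by linarith) (abs_nonneg _)
      exact div_nonneg (by linarith) (by positivity)
    have h3 : (-a f)/(2*(|a f₀|+1)) * (|a f₀|+1) = (-a f)/2 := by
      field_simp
    nlinarith
  -- key pointwise bound
  have key : ∀ a ∈ A, ∀ f : StrongDual ℝ X, ‖f‖ ≤ 1 → lam * (f x₀ - 1) + r ≤ a f := by
    intro a ha f hf
    have hcabs := stmt3_aux_bound hx₀ hf
    have hc1 : f x₀ ≤ 1 := (abs_le.mp hcabs).2
    have hc1' : -1 ≤ f x₀ := (abs_le.mp hcabs).1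
    have hda := hdA a ha
    have hMa := hM a ha
    have hdM : d ≤ M := le_trans hda hMa
    have hM0 : (0:ℝ) ≤ M := le_trans (norm_nonneg a) hMa
    have hlam0 : 0 < lam := by nlinarith
    by_cases hcε : f x₀ ≤ ε
    · -- regime 2: combine with f₀
      have h1c : (0:ℝ) < 1 - f x₀ := by linarith
      have hα0 : 0 < (1-ε)/(1-f x₀) := div_pos hε1' h1c
      have hγ0 : 0 ≤ (ε-f x₀)/(1-f x₀) := div_nonneg (by linarith) h1c.le
      have hαγ : (1-ε)/(1-f x₀) + (ε-f x₀)/(1-f x₀) = 1 := by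
        field_simp; ring
      have hcomb := lemA a ha (((1-ε)/(1-f x₀)) • f + ((ε-f x₀)/(1-f x₀)) • f₀)
        (stmt3_aux_norm f f₀ hα0.le hγ0 hαγ hf hf₀n.le) ?_
      · rw [stmt3_aux_apply2] at hcomb
        have haf₀ : a f₀ ≤ M := by
          calc a f₀ ≤ |a f₀| := le_abs_self _
            _ = ‖a f₀‖ := (Real.norm_eq_abs _).symm
            _ ≤ ‖a‖ * ‖f₀‖ := a.le_opNorm f₀
            _ ≤ M := by rw [hf₀n]; linarith
        have hclean : (1-ε) * (lam * (f x₀ - 1) + r) ≤ (f x₀ - ε) * M := by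
          nlinarith [mul_le_mul_of_nonneg_right hMl (by linarith : (0:ℝ) ≤ 1 - f x₀)]
        -- multiply hclean by 1/(1-c) : α * target ≤ -(γ * M)
        have htarget : (1-ε)/(1-f x₀) * (lam * (f x₀ - 1) + r)
            ≤ -((ε-f x₀)/(1-f x₀) * M) := by
          rw [div_mul_eq_mul_div, div_mul_eq_mul_div, ← neg_div,
            div_le_div_iff₀ h1c h1c]
          nlinarith [mul_le_mul_of_nonneg_right hclean h1c.le]
        have hfin : (1-ε)/(1-f x₀) * (lam * (f x₀ - 1) + r)
            ≤ (1-ε)/(1-f x₀) * a f := by nlinarith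
        exact le_of_mul_le_mul_left hfin hα0
      · show ε ≤ (((1-ε)/(1-f x₀)) • f + ((ε-f x₀)/(1-f x₀)) • f₀) x₀
        rw [stmt3_aux_apply, hf₀x]
        have heq : (1-ε)/(1-f x₀) * f x₀ + (ε-f x₀)/(1-f x₀) * 1 = ε := by
          field_simp; ring
        exact le_of_eq heq.symm
    · -- regime 1: combine with arbitrary g
      push_neg at hcε
      have h1c : (0:ℝ) < 1 + f x₀ := by linarith
      have hα0 : 0 < (1+ε)/(1+f x₀) := div_pos hεp h1c
      have hβ0 : 0 < (f x₀-ε)/(1+f x₀) := div_pos (by linarith) h1c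
      have hαβ : (1+ε)/(1+f x₀) + (f x₀-ε)/(1+f x₀) = 1 := by
        field_simp; ring
      have hslice : ∀ g : StrongDual ℝ X, ‖g‖ ≤ 1 →
          -((1+ε)/(1+f x₀) * a f) ≤ (f x₀-ε)/(1+f x₀) * a g := by
        intro g hg
        have hgx : -1 ≤ g x₀ := (abs_le.mp (stmt3_aux_bound hx₀ hg)).1
        have hcomb := lemA a ha (((1+ε)/(1+f x₀)) • f + ((f x₀-ε)/(1+f x₀)) • g)
          (stmt3_aux_norm f g hα0.le hβ0.le hαβ hf hg) ?_
        · rw [stmt3_aux_apply2] at hcomb; linarith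
        · show ε ≤ (((1+ε)/(1+f x₀)) • f + ((f x₀-ε)/(1+f x₀)) • g) x₀
          rw [stmt3_aux_apply]
          have heq : (1+ε)/(1+f x₀) * f x₀ - (f x₀-ε)/(1+f x₀) * 1 = ε := by
            field_simp; ring
          nlinarith [mul_le_mul_of_nonneg_left hgx hβ0.le]
      have haf0 : 0 ≤ a f := by
        have h0 := hslice 0 (by simp)
        simp only [map_zero, mul_zero] at h0
        nlinarith
      have hKnn : 0 ≤ (1+ε)/(1+f x₀) / ((f x₀-ε)/(1+f x₀)) * a f :=
        mul_nonneg (div_nonneg hα0.le hβ0.le) haf0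
      have habs : ∀ g : StrongDual ℝ X, ‖g‖ = 1 →
          ‖a g‖ ≤ (1+ε)/(1+f x₀) / ((f x₀-ε)/(1+f x₀)) * a f := by
        intro g hg
        have h1 := hslice g hg.le
        have h2 := hslice (-g) (by rw [norm_neg, hg])
        rw [map_neg] at h2
        rw [Real.norm_eq_abs, abs_le]
        constructor
        · rw [div_mul_eq_mul_div, ← neg_div, div_le_iff₀ hβ0]
          nlinarith
        · rw [div_mul_eq_mul_div, le_div_iff₀ hβ0]
          nlinarith
      have hnorm : ‖a‖ ≤ (1+ε)/(1+f x₀) / ((f x₀-ε)/(1+f x₀)) * a f :=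
        ContinuousLinearMap.opNorm_le_of_unit_norm hKnn habs
      have hfinal : (f x₀-ε)/(1+f x₀) * d ≤ (1+ε)/(1+f x₀) * a f := by
        have h1 := le_trans hda hnorm
        rw [div_mul_eq_mul_div, le_div_iff₀ hβ0] at h1
        nlinarith
      have hd1 : d ≤ (1+ε) * lam := by nlinarith
      have hclean : (1+ε) * (lam * (f x₀ - 1) + r) ≤ (f x₀ - ε) * d := by
        nlinarith [mul_le_mul_of_nonneg_right hd1 (by linarith : (0:ℝ) ≤ 1 - f x₀)]
      have htarget : (1+ε)/(1+f x₀) * (lam * (f x₀ - 1) + r)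
          ≤ (f x₀-ε)/(1+f x₀) * d := by
        rw [div_mul_eq_mul_div, div_mul_eq_mul_div, div_le_div_iff₀ h1c h1c]
        nlinarith [mul_le_mul_of_nonneg_right hclean h1c.le]
      have hfin : (1+ε)/(1+f x₀) * (lam * (f x₀ - 1) + r)
          ≤ (1+ε)/(1+f x₀) * a f := le_trans htarget hfinal
      exact le_of_mul_le_mul_left hfin hα0
  constructor
  · intro a ha
    rw [Metric.mem_closedBall]
    refine (dist_eq_norm a (lam • inclusionInDoubleDual ℝ X x₀)).trans_le ?_
    have hda := hdA a ha
    have hdM : d ≤ M := le_trans hda (hM a ha)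
    have hlr : 0 ≤ lam - r := by nlinarith
    have hb : ∀ f : StrongDual ℝ X, ‖f‖ = 1 →
        ‖(a - lam • inclusionInDoubleDual ℝ X x₀) f‖ ≤ lam - r := by
      intro f hf
      have h1 := key a ha f hf.le
      have h2 := key a ha (-f) (by rw [norm_neg, hf])
      rw [map_neg] at h2
      have hfx : (-f) x₀ = -(f x₀) := by simp
      rw [hfx] at h2
      have hexp : (a - lam • inclusionInDoubleDual ℝ X x₀) f = a f - lam * f x₀ := by
        simp [ContinuousLinearMap.sub_apply, ContinuousLinearMap.smul_apply,
          NormedSpace.dual_def, smul_eq_mul]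
      rw [hexp, Real.norm_eq_abs, abs_le]
      constructor <;> nlinarith
    exact ContinuousLinearMap.opNorm_le_of_unit_norm hlr hb
  · intro h0
    rw [Metric.mem_closedBall] at h0
    replace h0 : ‖lam • inclusionInDoubleDual ℝ X x₀‖ ≤ lam - r := by
      exact (dist_zero_left (lam • inclusionInDoubleDual ℝ X x₀)).symm.trans_le h0
    have hJ : ‖lam • inclusionInDoubleDual ℝ X x₀‖ = |lam| := by
      rw [← map_smul]
      have hJ1 := (inclusionInDoubleDualLi ℝ (E := X)).norm_map (lam • x₀)
      erw [hJ1, norm_smul, hx₀, mul_one, Real.norm_eq_abs]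
    rw [hJ] at h0
    have := le_abs_self lam
    linarith
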